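/- Let 𝒳 be a Polish space and let K be a nonempty compact subset of the space of Borel probability measures on 𝒳 with the weak topology. Define p(f) := sup_{μ ∈ K} log ∫ e^f dμ for f ∈ C_b(𝒳). If f_n ∈ C_b(𝒳) converge to f ∈ C_b(𝒳) bounded-uniformly-on-compacts, then p(f_n) → p(f). -/

import Mathlib

open MeasureTheory Filter Topology Set
open scoped ENNReal NNReal

/-- The map `ν ↦ ν U` is lower semicontinuous on probability measures for open `U`:
the superlevel sets are open. -/
lemma isOpen_measure_gt {𝒳 : Type*} [TopologicalSpace 𝒳] [PolishSpace 𝒳] [MeasurableSpace 𝒳]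
    [BorelSpace 𝒳] {U : Set 𝒳} (hU : IsOpen U) (c : ℝ≥0∞) :
    IsOpen {ν : ProbabilityMeasure 𝒳 | c < (ν : Measure 𝒳) U} := by
  letI := TopologicalSpace.upgradeIsCompletelyMetrizable 𝒳
  rw [isOpen_iff_mem_nhds]
  intro μ hμ
  have hlim : (μ : Measure 𝒳) U ≤ Filter.liminf (fun ν : ProbabilityMeasure 𝒳 => (ν : Measure 𝒳) U) (𝓝 μ) :=
    ProbabilityMeasure.le_liminf_measure_open_of_tendsto (L := 𝓝 μ) (μ := μ) (μs := id)
      tendsto_id hU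
  have h2 : ∀ᶠ ν : ProbabilityMeasure 𝒳 in 𝓝 μ, c < (ν : Measure 𝒳) U :=
    Filter.eventually_lt_of_lt_liminf (lt_of_lt_of_le hμ hlim)
  exact h2

/-- A compact set of probability measures on a Polish space is tight. -/
lemma tight_of_isCompact {𝒳 : Type*} [TopologicalSpace 𝒳] [PolishSpace 𝒳] [MeasurableSpace 𝒳]
    [BorelSpace 𝒳] {K : Set (ProbabilityMeasure 𝒳)} (hK : IsCompact K)
    {ε : ℝ≥0∞} (hε : 0 < ε) :
    ∃ C : Set 𝒳, IsCompact C ∧ ∀ μ ∈ K, (μ : Measure 𝒳) Cᶜ ≤ ε := by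
  classical
  rcases K.eq_empty_or_nonempty with rfl | ⟨μ0, hμ0⟩
  · exact ⟨∅, isCompact_empty, by simp⟩
  letI := TopologicalSpace.upgradeIsCompletelyMetrizable 𝒳
  haveI : Nonempty 𝒳 := by
    by_contra h
    rw [not_nonempty_iff] at h
    have : (μ0 : Measure 𝒳) Set.univ = 1 := measure_univ
    simp [Set.univ_eq_empty_iff.2 h] at this
  set u := TopologicalSpace.denseSeq 𝒳 with hu
  have hdense : DenseRange u := TopologicalSpace.denseRange_denseSeq 𝒳
  -- Claim A: uniform approximation of mass by finitely many balls
  have claimA : ∀ δ : ℝ, 0 < δ → ∀ η : ℝ≥0∞, 0 < η →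
      ∃ m : ℕ, ∀ μ ∈ K, (μ : Measure 𝒳) (⋃ i ∈ Finset.range (m+1), Metric.ball (u i) δ)ᶜ ≤ η := by
    intro δ hδ η hη
    set U : ℕ → Set 𝒳 := fun m => ⋃ i ∈ Finset.range (m+1), Metric.ball (u i) δ with hUdef
    have hUopen : ∀ m, IsOpen (U m) := fun m => isOpen_biUnion fun _ _ => Metric.isOpen_ball
    have hUmono : Monotone U := by
      intro a b hab
      apply Set.biUnion_subset_biUnion_left
      intro i hi
      have : i < a + 1 := Finset.mem_range.1 hi
      exact Finset.mem_range.2 (by omega)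
    have hUtot : (⋃ m, U m) = Set.univ := by
      ext x
      simp only [Set.mem_iUnion, Set.mem_univ, iff_true]
      obtain ⟨i, hi⟩ := Metric.denseRange_iff.1 hdense x δ hδ
      exact ⟨i, Set.mem_biUnion (Finset.self_mem_range_succ i) (by rwa [Metric.mem_ball])⟩
    set c : ℝ≥0∞ := 1 - η with hc
    have hc1 : c < 1 := ENNReal.sub_lt_self ENNReal.one_ne_top one_ne_zero hη.ne'
    -- the open cover
    have hcover : K ⊆ ⋃ m, {ν : ProbabilityMeasure 𝒳 | c < (ν : Measure 𝒳) (U m)} := by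
      intro μ _
      have : Tendsto (fun m => (μ : Measure 𝒳) (U m)) atTop (𝓝 ((μ : Measure 𝒳) (⋃ m, U m))) :=
        tendsto_measure_iUnion_atTop hUmono
      rw [hUtot, measure_univ] at this
      have := this.eventually_const_lt hc1  -- hope this exists
      rcases this.exists with ⟨m, hm⟩
      exact Set.mem_iUnion.2 ⟨m, hm⟩
    obtain ⟨t, ht⟩ := hK.elim_finite_subcover _ (fun m => isOpen_measure_gt (hUopen m) c) hcover
    refine ⟨t.sup id, fun μ hμ => ?_⟩
    obtain ⟨m, hmt, hm⟩ := Set.mem_iUnion₂.1 (ht hμ)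
    have hmle : m ≤ t.sup id := Finset.le_sup (f := id) hmt
    have hm' : c < (μ : Measure 𝒳) (U (t.sup id)) :=
      lt_of_lt_of_le hm (measure_mono (hUmono hmle))
    -- conclude compl bound
    have hmeas : MeasurableSet (U (t.sup id)) := (hUopen _).measurableSet
    rw [prob_compl_eq_one_sub hmeas]
    calc (1 : ℝ≥0∞) - (μ : Measure 𝒳) (U (t.sup id)) ≤ 1 - c := tsub_le_tsub_left hm'.le 1
    _ = 1 - (1 - η) := rfl
    _ ≤ η := tsub_tsub_le
  -- Now build the compact set
  choose m hm using fun k : ℕ => claimA (1 / (k + 1)) (by positivity) (ε * 2⁻¹ ^ (k + 1))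
    (ENNReal.mul_pos hε.ne' (pow_ne_zero _ (by norm_num)))
  set U : ℕ → Set 𝒳 := fun k => ⋃ i ∈ Finset.range (m k + 1), Metric.ball (u i) (1 / (k + 1))
    with hUdef
  set S : Set 𝒳 := ⋂ k, U k with hS
  refine ⟨closure S, ?_, ?_⟩
  · apply TotallyBounded.isCompact_of_isClosed (TotallyBounded.closure ?_) isClosed_closure
    rw [Metric.totallyBounded_iff]
    intro r hr
    obtain ⟨k, hk⟩ := exists_nat_gt (1 / r)
    refine ⟨(Finset.range (m k + 1)).image u, Finset.finite_toSet _, ?_⟩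
    have hsub : S ⊆ U k := Set.iInter_subset U k
    refine hsub.trans ?_
    intro x hx
    rw [Set.mem_iUnion₂] at hx
    obtain ⟨i, hi, hxi⟩ := hx
    rw [Set.mem_iUnion₂]
    refine ⟨u i, by rw [Finset.coe_image]; exact Set.mem_image_of_mem u hi, ?_⟩
    have h1 : (1 : ℝ) / (k + 1) < r := by
      rw [div_lt_iff₀ (by positivity)]
      rw [div_lt_iff₀ hr] at hk
      nlinarith
    exact Metric.ball_subset_ball h1.le hxi
  · intro μ hμ
    have h1 : (μ : Measure 𝒳) (closure S)ᶜ ≤ (μ : Measure 𝒳) Sᶜ :=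
      measure_mono (Set.compl_subset_compl.2 subset_closure)
    refine h1.trans ?_
    have h2 : Sᶜ = ⋃ k, (U k)ᶜ := by rw [hS, Set.compl_iInter]
    rw [h2]
    refine (measure_iUnion_le _).trans ?_
    calc ∑' k, (μ : Measure 𝒳) (U k)ᶜ ≤ ∑' k, ε * 2⁻¹ ^ (k + 1) :=
          ENNReal.tsum_le_tsum fun k => hm k μ hμ
    _ = ε := by
        rw [show (fun k : ℕ => ε * 2⁻¹ ^ (k+1)) = fun k : ℕ => (ε * 2⁻¹) * 2⁻¹ ^ k by
              funext k; ring, ENNReal.tsum_mul_left, ENNReal.tsum_geometric,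
          ENNReal.one_sub_inv_two, mul_assoc,
          ENNReal.mul_inv_cancel (by norm_num) (by norm_num), mul_one]

lemma abs_exp_sub_exp_le {M a b : ℝ} (ha : a ≤ M) (hb : b ≤ M) :
    |Real.exp a - Real.exp b| ≤ Real.exp M * |a - b| := by
  wlog hab : b ≤ a generalizing a b
  · rw [abs_sub_comm, abs_sub_comm a b]; exact this hb ha (le_of_not_ge hab)
  rw [abs_of_nonneg (sub_nonneg.2 (Real.exp_le_exp.2 hab)), abs_of_nonneg (sub_nonneg.2 hab)]
  have h1 : 1 - Real.exp (b - a) ≤ a - b := by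
    have := Real.add_one_le_exp (b - a)
    linarith
  have h2 : Real.exp a - Real.exp b = Real.exp a * (1 - Real.exp (b - a)) := by
    rw [mul_sub, mul_one, ← Real.exp_add]; ring_nf
  rw [h2]
  calc Real.exp a * (1 - Real.exp (b - a)) ≤ Real.exp a * (a - b) := by
        apply mul_le_mul_of_nonneg_left h1 (Real.exp_nonneg a)
  _ ≤ Real.exp M * (a - b) := mul_le_mul_of_nonneg_right (Real.exp_le_exp.2 ha) (by linarith)

lemma abs_log_sub_log_le {m a b : ℝ} (hm : 0 < m) (ha : m ≤ a) (hb : m ≤ b) :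
    |Real.log a - Real.log b| ≤ m⁻¹ * |a - b| := by
  wlog hab : b ≤ a generalizing a b
  · rw [abs_sub_comm, abs_sub_comm a b]; exact this hb ha (le_of_not_ge hab)
  have hbpos : 0 < b := lt_of_lt_of_le hm hb
  have hapos : 0 < a := lt_of_lt_of_le hm ha
  rw [abs_of_nonneg (sub_nonneg.2 (Real.log_le_log hbpos hab)),
    abs_of_nonneg (sub_nonneg.2 hab), ← Real.log_div hapos.ne' hbpos.ne']
  have h1 : Real.log (a / b) ≤ a / b - 1 := Real.log_le_sub_one_of_pos (by positivity)
  have h2 : a / b - 1 = (a - b) / b := by field_simp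
  have h3 : (a - b) / b ≤ (a - b) / m := by
    apply div_le_div_of_nonneg_left (by linarith) hm hb
  calc Real.log (a / b) ≤ (a - b) / m := by rw [h2] at h1; linarith [h1.trans h3]
  _ = m⁻¹ * (a - b) := by rw [div_eq_inv_mul]

lemma abs_ciSup_sub_ciSup_le {ι : Type*} [Nonempty ι] {a b : ι → ℝ} {c : ℝ}
    (hba : BddAbove (Set.range a)) (hbb : BddAbove (Set.range b))
    (h : ∀ i, |a i - b i| ≤ c) :
    |(⨆ i, a i) - ⨆ i, b i| ≤ c := by
  rw [abs_sub_le_iff]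
  constructor
  · rw [sub_le_iff_le_add]
    apply ciSup_le fun i => ?_
    have := abs_sub_le_iff.1 (h i)
    calc a i ≤ b i + c := by linarith [this.1]
    _ ≤ (⨆ i, b i) + c := by linarith [le_ciSup hbb i]
    _ = c + ⨆ i, b i := by ring
  · rw [sub_le_iff_le_add]
    apply ciSup_le fun i => ?_
    have := abs_sub_le_iff.1 (h i)
    calc b i ≤ a i + c := by linarith [this.2]
    _ ≤ (⨆ i, a i) + c := by linarith [le_ciSup hba i]
    _ = c + ⨆ i, a i := by ring



/-- For a nonempty weakly compact set `K` of Borel probability measures on a Polish space,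
the functional `p(f) := sup_{μ ∈ K} log ∫ e^f dμ` is sequentially continuous for
bounded-uniform-on-compacts (strict) convergence on `C_b(𝒳)`. -/
theorem sup_log_exp_integral_continuous_buc
    {𝒳 : Type*} [TopologicalSpace 𝒳] [PolishSpace 𝒳] [MeasurableSpace 𝒳] [BorelSpace 𝒳]
    (K : Set (ProbabilityMeasure 𝒳)) (hKne : K.Nonempty) (hK : IsCompact K)
    (fs : ℕ → BoundedContinuousFunction 𝒳 ℝ) (f : BoundedContinuousFunction 𝒳 ℝ)
    (hbd : ∃ C : ℝ, ∀ n, ‖fs n‖ ≤ C)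
    (hunif : ∀ K' : Set 𝒳, IsCompact K' →
      TendstoUniformlyOn (fun n x => fs n x) (fun x => f x) atTop K') :
    Tendsto
      (fun n => ⨆ μ : K, Real.log (∫ x, Real.exp (fs n x) ∂((μ : ProbabilityMeasure 𝒳) : Measure 𝒳)))
      atTop
      (𝓝 (⨆ μ : K, Real.log (∫ x, Real.exp (f x) ∂((μ : ProbabilityMeasure 𝒳) : Measure 𝒳)))) := by
  haveI : Nonempty K := hKne.to_subtype
  obtain ⟨C0, hC0⟩ := hbd
  set M : ℝ := max (max C0 ‖f‖) 0 with hM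
  have hMnn : 0 ≤ M := le_max_right _ _
  have hfsM : ∀ n x, |fs n x| ≤ M := fun n x =>
    ((fs n).norm_coe_le_norm x).trans ((hC0 n).trans ((le_max_left _ _).trans (le_max_left _ _)))
  have hfM : ∀ x, |f x| ≤ M := fun x =>
    (f.norm_coe_le_norm x).trans ((le_max_right C0 ‖f‖).trans (le_max_left _ _))
  -- integrability
  have hint : ∀ (g : BoundedContinuousFunction 𝒳 ℝ) (μ : ProbabilityMeasure 𝒳),
      Integrable (fun x => Real.exp (g x)) (μ : Measure 𝒳) := by
    intro g μ
    apply Integrable.mono' (integrable_const (Real.exp ‖g‖))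
      ((Real.continuous_exp.comp g.continuous).aestronglyMeasurable)
    filter_upwards with x
    simp only [Function.comp_apply, Real.norm_eq_abs, Real.abs_exp]
    exact Real.exp_le_exp.2 ((le_abs_self _).trans (g.norm_coe_le_norm x))
  -- lower/upper bounds for integrals
  have hlow : ∀ (g : BoundedContinuousFunction 𝒳 ℝ), (∀ x, |g x| ≤ M) → ∀ (μ : ProbabilityMeasure 𝒳),
      Real.exp (-M) ≤ ∫ x, Real.exp (g x) ∂(μ : Measure 𝒳) := by
    intro g hg μ
    have h := integral_mono (integrable_const (Real.exp (-M))) (hint g μ)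
      (fun x => Real.exp_le_exp.2 (neg_le_of_abs_le (hg x)))
    simpa [integral_const] using h
  have hupp : ∀ (g : BoundedContinuousFunction 𝒳 ℝ), (∀ x, |g x| ≤ M) → ∀ (μ : ProbabilityMeasure 𝒳),
      ∫ x, Real.exp (g x) ∂(μ : Measure 𝒳) ≤ Real.exp M := by
    intro g hg μ
    have h := integral_mono (hint g μ) (integrable_const (Real.exp M))
      (fun x => Real.exp_le_exp.2 ((le_abs_self _).trans (hg x)))
    simpa [integral_const] using h
  -- boundedness of the sup families
  have hbdd : ∀ (g : BoundedContinuousFunction 𝒳 ℝ), (∀ x, |g x| ≤ M) →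
      BddAbove (Set.range fun μ : K => Real.log (∫ x, Real.exp (g x) ∂((μ : ProbabilityMeasure 𝒳) : Measure 𝒳))) := by
    intro g hg
    refine ⟨M, ?_⟩
    rintro _ ⟨μ, rfl⟩
    calc Real.log (∫ x, Real.exp (g x) ∂((μ : ProbabilityMeasure 𝒳) : Measure 𝒳))
        ≤ Real.log (Real.exp M) :=
          Real.log_le_log ((Real.exp_pos (-M)).trans_le (hlow g hg μ)) (hupp g hg μ)
    _ = M := Real.log_exp M
  rw [Metric.tendsto_atTop]
  intro ε hε
  set ε₁ : ℝ := ε / 2 * Real.exp (-M) with hε₁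
  have hε₁pos : 0 < ε₁ := by positivity
  set δ : ℝ := ε₁ / 2 with hδ
  have hδpos : 0 < δ := by positivity
  -- tightness
  obtain ⟨Cs, hCscomp, hCsmeas⟩ := tight_of_isCompact hK
    (ε := ENNReal.ofReal (δ / (2 * Real.exp M))) (ENNReal.ofReal_pos.2 (by positivity))
  -- uniform convergence on Cs
  have huc := (Metric.tendstoUniformlyOn_iff.1 (hunif Cs hCscomp)) (δ * Real.exp (-M))
    (by positivity)
  obtain ⟨N, hN⟩ := huc.exists_forall_of_atTop
  refine ⟨N, fun n hn => ?_⟩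
  rw [Real.dist_eq]
  have key : ∀ μ : K,
      |Real.log (∫ x, Real.exp (fs n x) ∂((μ : ProbabilityMeasure 𝒳) : Measure 𝒳)) -
       Real.log (∫ x, Real.exp (f x) ∂((μ : ProbabilityMeasure 𝒳) : Measure 𝒳))| ≤ ε / 2 := by
    rintro ⟨μ, hμ⟩
    simp only
    -- estimate the integral difference
    have hintn := hint (fs n) μ
    have hintf := hint f μ
    have hdiff : |(∫ x, Real.exp (fs n x) ∂(μ : Measure 𝒳)) -
        ∫ x, Real.exp (f x) ∂(μ : Measure 𝒳)| ≤ ε₁ := by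
      rw [← integral_sub hintn hintf]
      have habs : |∫ x, (Real.exp (fs n x) - Real.exp (f x)) ∂(μ : Measure 𝒳)| ≤
          ∫ x, |Real.exp (fs n x) - Real.exp (f x)| ∂(μ : Measure 𝒳) := by
        have := norm_integral_le_integral_norm (μ := (μ : Measure 𝒳))
          (fun x => Real.exp (fs n x) - Real.exp (f x))
        simpa [Real.norm_eq_abs] using this
      refine habs.trans ?_
      have hintabs : Integrable (fun x => |Real.exp (fs n x) - Real.exp (f x)|) (μ : Measure 𝒳) :=
        (hintn.sub hintf).abs
      rw [← integral_add_compl hCscomp.measurableSet hintabs]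
      have h1 : ∫ x in Cs, |Real.exp (fs n x) - Real.exp (f x)| ∂(μ : Measure 𝒳) ≤ δ := by
        have hb : ∀ x ∈ Cs, ‖|Real.exp (fs n x) - Real.exp (f x)|‖ ≤
            Real.exp M * (δ * Real.exp (-M)) := by
          intro x hx
          rw [norm_abs_eq_norm, Real.norm_eq_abs]
          refine (abs_exp_sub_exp_le ((le_abs_self _).trans (hfsM n x))
            ((le_abs_self _).trans (hfM x))).trans ?_
          apply mul_le_mul_of_nonneg_left _ (Real.exp_nonneg M)
          have := hN n hn x hx
          rw [dist_comm, Real.dist_eq] at this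
          exact this.le
        have := norm_setIntegral_le_of_norm_le_const (μ := (μ : Measure 𝒳)) (s := Cs)
          (measure_lt_top _ _) hb
        rw [Real.norm_eq_abs] at this
        refine (le_abs_self _).trans (this.trans ?_)
        have htr : ((μ : Measure 𝒳) Cs).toReal ≤ 1 := by
          rw [← ENNReal.toReal_one]
          exact ENNReal.toReal_mono ENNReal.one_ne_top prob_le_one
        calc Real.exp M * (δ * Real.exp (-M)) * ((μ : Measure 𝒳) Cs).toReal
            ≤ Real.exp M * (δ * Real.exp (-M)) * 1 := by
              apply mul_le_mul_of_nonneg_left htr (by positivity)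
        _ = δ := by rw [mul_one, ← mul_assoc, mul_comm (Real.exp M) δ, mul_assoc,
              ← Real.exp_add, add_neg_cancel, Real.exp_zero, mul_one]
      have h2 : ∫ x in Csᶜ, |Real.exp (fs n x) - Real.exp (f x)| ∂(μ : Measure 𝒳) ≤ δ := by
        have hb : ∀ x ∈ Csᶜ, ‖|Real.exp (fs n x) - Real.exp (f x)|‖ ≤ 2 * Real.exp M := by
          intro x _
          rw [norm_abs_eq_norm, Real.norm_eq_abs]
          have e1 : Real.exp (fs n x) ≤ Real.exp M :=
            Real.exp_le_exp.2 ((le_abs_self _).trans (hfsM n x))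
          have e2 : Real.exp (f x) ≤ Real.exp M :=
            Real.exp_le_exp.2 ((le_abs_self _).trans (hfM x))
          have e3 : 0 < Real.exp (fs n x) := Real.exp_pos _
          have e4 : 0 < Real.exp (f x) := Real.exp_pos _
          rw [abs_sub_le_iff]
          constructor <;> linarith
        have := norm_setIntegral_le_of_norm_le_const (μ := (μ : Measure 𝒳)) (s := Csᶜ)
          (measure_lt_top _ _) hb
        rw [Real.norm_eq_abs] at this
        refine (le_abs_self _).trans (this.trans ?_)
        have htr : ((μ : Measure 𝒳) Csᶜ).toReal ≤ δ / (2 * Real.exp M) := by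
          apply ENNReal.toReal_le_of_le_ofReal (by positivity) (hCsmeas μ hμ)
        calc (2 * Real.exp M) * ((μ : Measure 𝒳) Csᶜ).toReal
            ≤ (2 * Real.exp M) * (δ / (2 * Real.exp M)) := by
              apply mul_le_mul_of_nonneg_left htr (by positivity)
        _ = δ := by field_simp
      calc (∫ x in Cs, |Real.exp (fs n x) - Real.exp (f x)| ∂(μ : Measure 𝒳)) +
            ∫ x in Csᶜ, |Real.exp (fs n x) - Real.exp (f x)| ∂(μ : Measure 𝒳) ≤ δ + δ :=
            add_le_add h1 h2
      _ = ε₁ := by rw [hδ]; ring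
    -- pass to logs
    have hlog := abs_log_sub_log_le (Real.exp_pos (-M)) (hlow (fs n) (hfsM n) μ) (hlow f hfM μ)
    refine hlog.trans ?_
    rw [Real.exp_neg, inv_inv]
    calc Real.exp M * |(∫ x, Real.exp (fs n x) ∂(μ : Measure 𝒳)) -
          ∫ x, Real.exp (f x) ∂(μ : Measure 𝒳)| ≤ Real.exp M * ε₁ :=
          mul_le_mul_of_nonneg_left hdiff (Real.exp_nonneg M)
    _ = ε / 2 := by rw [hε₁, ← mul_assoc, mul_comm (Real.exp M), mul_assoc, ← Real.exp_add,
          add_neg_cancel, Real.exp_zero, mul_one]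
  have := abs_ciSup_sub_ciSup_le (hbdd (fs n) (hfsM n)) (hbdd f hfM) key
  linarith [this, hε]
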